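/- For every integer k ≥ 1, arctan(b_k) = π/2^{k+2}; equivalently, b_k = tan(π/2^{k+2}). -/

import Mathlib

open Real Filter Topology

lemma angle_pos (k : ℕ) : 0 < π / 2 ^ (k + 1) := by
  apply div_pos Real.pi_pos
  positivity

lemma angle_lt (k : ℕ) (hk : 1 ≤ k) : π / 2 ^ (k + 1) < π / 2 := by
  apply div_lt_div_of_pos_left Real.pi_pos (by norm_num)
  have : (2:ℝ) ^ 1 < 2 ^ (k + 1) := by
    apply pow_lt_pow_right₀ (by norm_num)
    omega
  simpa using this

lemma cos_form (a : ℕ → ℝ)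
    (ha1 : a 1 = Real.sqrt 2)
    (ha : ∀ k ≥ 1, a (k + 1) = Real.sqrt (2 + a k)) :
    ∀ k ≥ 1, a k = 2 * Real.cos (π / 2 ^ (k + 1)) := by
  intro k hk
  induction k with
  | zero => omega
  | succ n ih =>
    rcases Nat.eq_or_lt_of_le hk with h | h
    · -- n + 1 = 1
      have hn : n = 0 := by omega
      subst hn
      rw [ha1]
      norm_num [Real.cos_pi_div_four]
      rw [Real.sqrt_eq_iff_eq_sq] <;> nlinarith [Real.sq_sqrt (by norm_num : (2:ℝ) ≥ 0),
        Real.sqrt_nonneg 2]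
    · have hn : 1 ≤ n := by omega
      have ihn := ih hn
      rw [ha n hn, ihn]
      have key : 2 + 2 * Real.cos (π / 2 ^ (n + 1)) =
          (2 * Real.cos (π / 2 ^ (n + 1 + 1))) ^ 2 := by
        have h2 : π / 2 ^ (n + 1 + 1) = (π / 2 ^ (n + 1)) / 2 := by
          rw [div_div]; ring_nf
        rw [h2]
        have := Real.cos_sq (π / 2 ^ (n + 1) / 2)
        rw [show 2 * (π / 2 ^ (n + 1) / 2) = π / 2 ^ (n + 1) by ring] at this
        nlinarith [this]
      rw [key]
      rw [Real.sqrt_sq]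
      have h1 := angle_pos (n + 1)
      have h2 := angle_lt (n + 1) (by omega)
      have hcos : 0 < Real.cos (π / 2 ^ (n + 1 + 1)) :=
        Real.cos_pos_of_mem_Ioo ⟨by linarith, h2⟩
      linarith

theorem arctan_b_eq (a : ℕ → ℝ)
    (ha1 : a 1 = Real.sqrt 2)
    (ha : ∀ k ≥ 1, a (k + 1) = Real.sqrt (2 + a k))
    (b : ℕ → ℝ)
    (hb : ∀ k ≥ 1, b k = Real.sqrt (2 - a k) / a (k + 1)) :
    ∀ k ≥ 1, Real.arctan (b k) = π / 2 ^ (k + 2) ∧ b k = Real.tan (π / 2 ^ (k + 2)) := by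
  intro k hk
  have hcf := cos_form a ha1 ha
  have hk1 := hcf k hk
  have hk2 := hcf (k + 1) (by omega)
  have hpos := angle_pos (k + 1)
  have hlt := angle_lt (k + 1) (by omega)
  have hcos : 0 < Real.cos (π / 2 ^ (k + 2)) :=
    Real.cos_pos_of_mem_Ioo ⟨by linarith, by simpa using hlt⟩
  have hsin : 0 < Real.sin (π / 2 ^ (k + 2)) :=
    Real.sin_pos_of_pos_of_lt_pi (by simpa using hpos) (by
      have := Real.pi_pos
      calc π / 2 ^ (k + 2) < π / 2 := by simpa using hlt
        _ < π := by linarith)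
  have h2 : π / 2 ^ (k + 2) = (π / 2 ^ (k + 1)) / 2 := by
    rw [div_div]; ring_nf
  have hbtan : b k = Real.tan (π / 2 ^ (k + 2)) := by
    rw [hb k hk, hk1, hk2]
    have hsq : 2 - 2 * Real.cos (π / 2 ^ (k + 1)) =
        (2 * Real.sin (π / 2 ^ (k + 2))) ^ 2 := by
      rw [h2]
      have h3 := Real.cos_sq (π / 2 ^ (k + 1) / 2)
      rw [show 2 * (π / 2 ^ (k + 1) / 2) = π / 2 ^ (k + 1) by ring] at h3
      have h4 := Real.sin_sq_add_cos_sq (π / 2 ^ (k + 1) / 2)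
      nlinarith [h3, h4]
    rw [hsq, Real.sqrt_sq (by linarith), Real.tan_eq_sin_div_cos]
    have : k + 1 + 1 = k + 2 := rfl
    rw [this]
    field_simp
  refine ⟨?_, hbtan⟩
  rw [hbtan, Real.arctan_tan (by linarith) (by simpa using hlt)]
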